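/- Let K, Φ ∈ ℝ with Φ > 0 and Φ² + K > 0. Then ∫_{x > 0} ∫_{y ∈ ℝ} x (x² + y² − 1) / ( Φ²(1+x)² + (Φ² + K) y² + K (1−x)² )³ dy dx = π / ( 8 Φ² (K + Φ²)² ). -/

import Mathlib

open MeasureTheory Filter Real Set Topology

noncomputable section

lemma tendsto_inv_atBot_zero'' : Tendsto (fun y : ℝ => y⁻¹) atBot (𝓝 (0:ℝ)) := by
  have h := ((tendsto_inv_atTop_zero (𝕜 := ℝ)).comp tendsto_neg_atBot_atTop).neg
  simpa [Function.comp_def, inv_neg] using h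

set_option maxHeartbeats 1000000 in
lemma inner_int (s t x : ℝ) (hs : 0 < s) (ht : 0 < t) :
    (∫ y : ℝ, x * (x ^ 2 + y ^ 2 - 1) / (s ^ 2 + t ^ 2 * y ^ 2) ^ 3)
      = Real.pi * (x * (s ^ 2 + 3 * t ^ 2 * (x ^ 2 - 1))) / (8 * s ^ 5 * t ^ 3) := by
  have hD : ∀ y : ℝ, 0 < s ^ 2 + t ^ 2 * y ^ 2 := fun y => by positivity
  set p := x * (s ^ 2 + 3 * t ^ 2 * (x ^ 2 - 1)) / (8 * s ^ 4) with hp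
  set q := x * (x ^ 2 - 1) / s ^ 2 - x * (s ^ 2 + 3 * t ^ 2 * (x ^ 2 - 1)) / (8 * s ^ 2 * t ^ 2)
    with hq
  set r := x * (s ^ 2 + 3 * t ^ 2 * (x ^ 2 - 1)) / (8 * s ^ 5 * t ^ 3) with hr
  set f : ℝ → ℝ := fun y =>
    (p * y ^ 3 + q * y) / (s ^ 2 + t ^ 2 * y ^ 2) ^ 2 + r * Real.arctan (t / s * y) with hf
  -- derivative
  have hderiv : ∀ y : ℝ, HasDerivAt f (x * (x ^ 2 + y ^ 2 - 1) / (s ^ 2 + t ^ 2 * y ^ 2) ^ 3) y := by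
    intro y
    have h1 := ((hasDerivAt_pow 3 y).const_mul p).add ((hasDerivAt_id y).const_mul q)
    have h2 := (((hasDerivAt_pow 2 y).const_mul (t ^ 2)).const_add (s ^ 2)).pow 2
    have h3 := (Real.hasDerivAt_arctan (t / s * y)).comp y ((hasDerivAt_id y).const_mul (t / s))
    simp only [Function.comp_def] at h3
    have htot := (h1.div h2 (by exact pow_ne_zero 2 (hD y).ne')).add (h3.const_mul r)
    refine htot.congr_deriv (Eq.symm ?_)
    simp only [Pi.add_apply, Pi.pow_apply, id_eq]
    rw [hp, hq, hr]
    have h4 : (0:ℝ) < 1 + (t / s * y) ^ 2 := by positivity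
    push_cast
    field_simp
    ring
  -- integrability
  have hint : Integrable (fun y : ℝ => x * (x ^ 2 + y ^ 2 - 1) / (s ^ 2 + t ^ 2 * y ^ 2) ^ 3) := by
    set m := min (s ^ 2) (t ^ 2) with hm
    have hm0 : 0 < m := lt_min (by positivity) (by positivity)
    refine (integrable_inv_one_add_sq.const_mul (|x| * (x ^ 2 + 1) / m ^ 3)).mono'
      ?_ ?_
    · exact (Continuous.div (by continuity) (by continuity)
        (fun y => by positivity)).aestronglyMeasurable
    · refine Filter.Eventually.of_forall (fun y => ?_)
      have hden : 0 < s ^ 2 + t ^ 2 * y ^ 2 := hD y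
      have hkey : m * (1 + y ^ 2) ≤ s ^ 2 + t ^ 2 * y ^ 2 := by
        have h1 := min_le_left (s ^ 2) (t ^ 2)
        have h2 := min_le_right (s ^ 2) (t ^ 2)
        nlinarith [sq_nonneg y]
      have hkey3 : m ^ 3 * (1 + y ^ 2) ^ 3 ≤ (s ^ 2 + t ^ 2 * y ^ 2) ^ 3 := by
        calc m ^ 3 * (1 + y ^ 2) ^ 3 = (m * (1 + y ^ 2)) ^ 3 := by ring
        _ ≤ (s ^ 2 + t ^ 2 * y ^ 2) ^ 3 := by
            apply pow_le_pow_left₀ (by positivity) hkey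
      have hnum : |x * (x ^ 2 + y ^ 2 - 1)| ≤ |x| * ((x ^ 2 + 1) * (1 + y ^ 2)) := by
        rw [abs_mul]
        apply mul_le_mul_of_nonneg_left _ (abs_nonneg x)
        rw [abs_le]
        constructor <;> nlinarith [sq_nonneg x, sq_nonneg y, sq_nonneg (x*y)]
      rw [norm_div, Real.norm_eq_abs, Real.norm_eq_abs, abs_pow,
        abs_of_pos hden]
      have hX : (0:ℝ) ≤ |x| * (x ^ 2 + 1) := by positivity
      calc |x * (x ^ 2 + y ^ 2 - 1)| / (s ^ 2 + t ^ 2 * y ^ 2) ^ 3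
          ≤ (|x| * ((x ^ 2 + 1) * (1 + y ^ 2))) / (m ^ 3 * (1 + y ^ 2) ^ 3) := by
            apply div_le_div₀ (by positivity) hnum (by positivity) hkey3
        _ = (|x| * (x ^ 2 + 1)) / (m ^ 3 * (1 + y ^ 2) ^ 2) := by
            rw [div_eq_div_iff (by positivity) (by positivity)]; ring
        _ ≤ (|x| * (x ^ 2 + 1)) / (m ^ 3 * (1 + y ^ 2)) := by
            rw [div_le_div_iff₀ (by positivity) (by positivity)]
            nlinarith [mul_nonneg (mul_nonneg hX (by positivity : (0:ℝ) ≤ m ^ 3)) (sq_nonneg y),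
              mul_nonneg (mul_nonneg (mul_nonneg hX (by positivity : (0:ℝ) ≤ m ^ 3)) (sq_nonneg y)) (sq_nonneg y)]
        _ = |x| * (x ^ 2 + 1) / m ^ 3 * (1 + y ^ 2)⁻¹ := by
            rw [div_mul_eq_div_div, div_eq_mul_inv]
  -- limits
  have hrat : ∀ y : ℝ, y ≠ 0 →
      (p * y ^ 3 + q * y) / (s ^ 2 + t ^ 2 * y ^ 2) ^ 2
        = (p * y⁻¹ + q * y⁻¹ ^ 3) / ((s ^ 2 * y⁻¹ ^ 2 + t ^ 2) ^ 2) := by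
    intro y hy
    clear_value f r q p
    rw [div_eq_div_iff (by positivity) (by positivity)]
    field_simp
  have hφ : Tendsto (fun z : ℝ => (p * z + q * z ^ 3) / ((s ^ 2 * z ^ 2 + t ^ 2) ^ 2)) (𝓝 0)
      (𝓝 0) := by
    have hc : ContinuousAt (fun z : ℝ => (p * z + q * z ^ 3) / ((s ^ 2 * z ^ 2 + t ^ 2) ^ 2)) 0 := by
      apply ContinuousAt.div (by fun_prop) (by fun_prop)
      norm_num
      positivity
    have h0 : (fun z : ℝ => (p * z + q * z ^ 3) / ((s ^ 2 * z ^ 2 + t ^ 2) ^ 2)) 0 = 0 := by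
      norm_num
    simpa [h0] using hc.tendsto
  have hrat_top : Tendsto (fun y : ℝ => (p * y ^ 3 + q * y) / (s ^ 2 + t ^ 2 * y ^ 2) ^ 2)
      atTop (𝓝 0) := by
    apply (hφ.comp tendsto_inv_atTop_zero).congr'
    filter_upwards [eventually_gt_atTop (0 : ℝ)] with y hy
    exact (hrat y hy.ne').symm
  have hrat_bot : Tendsto (fun y : ℝ => (p * y ^ 3 + q * y) / (s ^ 2 + t ^ 2 * y ^ 2) ^ 2)
      atBot (𝓝 0) := by
    apply (hφ.comp tendsto_inv_atBot_zero'').congr'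
    filter_upwards [eventually_lt_atBot (0 : ℝ)] with y hy
    exact (hrat y hy.ne).symm
  have harg_top : Tendsto (fun y : ℝ => t / s * y) atTop atTop :=
    Tendsto.const_mul_atTop (by positivity) tendsto_id
  have harg_bot : Tendsto (fun y : ℝ => t / s * y) atBot atBot :=
    Tendsto.const_mul_atBot (by positivity) tendsto_id
  have harc_top : Tendsto (fun y : ℝ => r * Real.arctan (t / s * y)) atTop
      (𝓝 (r * (Real.pi / 2))) :=
    (((tendsto_nhds_of_tendsto_nhdsWithin Real.tendsto_arctan_atTop).comp harg_top).const_mul r)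
  have harc_bot : Tendsto (fun y : ℝ => r * Real.arctan (t / s * y)) atBot
      (𝓝 (r * (-(Real.pi / 2)))) :=
    (((tendsto_nhds_of_tendsto_nhdsWithin Real.tendsto_arctan_atBot).comp harg_bot).const_mul r)
  have htop : Tendsto f atTop (𝓝 (0 + r * (Real.pi / 2))) := hrat_top.add harc_top
  have hbot : Tendsto f atBot (𝓝 (0 + r * (-(Real.pi / 2)))) := hrat_bot.add harc_bot
  rw [MeasureTheory.integral_of_hasDerivAt_of_tendsto hderiv hint hbot htop]
  rw [hr]
  ring

set_option maxHeartbeats 1000000 in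
lemma outer_int (b c q3 q2 q1 q0 : ℝ) (hb : 0 < b) (hbc : 0 < b + c)
    (hpoly : ∀ x : ℝ,
      (3 * q3 * x ^ 2 + 2 * q2 * x + q1) * (b * x ^ 2 + 2 * c * x + b)
        - 3 * (q3 * x ^ 3 + q2 * x ^ 2 + q1 * x + q0) * (b * x + c)
        = x * ((b * x ^ 2 + 2 * c * x + b) + 3 * b * (x ^ 2 - 1))) :
    (∫ x in Set.Ioi (0 : ℝ),
        Real.pi * (x * ((b * x ^ 2 + 2 * c * x + b) + 3 * b * (x ^ 2 - 1))) /
          (8 * (Real.sqrt (b * x ^ 2 + 2 * c * x + b)) ^ 5 * (Real.sqrt b) ^ 3))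
      = Real.pi * (q3 - q0) / (8 * b ^ 3) := by
  set δ := min b (b + c) with hδdef
  have hδ : 0 < δ := lt_min hb hbc
  have hA1 : ∀ x : ℝ, 0 ≤ x → δ * (1 + x ^ 2) ≤ b * x ^ 2 + 2 * c * x + b := by
    intro x hx
    rcases le_or_gt 0 c with hc | hc
    · have h1 : δ ≤ b := min_le_left _ _
      nlinarith [mul_nonneg hc hx, sq_nonneg x, mul_nonneg (sub_nonneg.2 h1) (sq_nonneg x)]
    · have h1 : δ ≤ b + c := min_le_right _ _
      nlinarith [mul_nonneg (neg_nonneg.2 hc.le) (sq_nonneg (1 - x)),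
        mul_nonneg (sub_nonneg.2 h1) (sq_nonneg x)]
  have hApos : ∀ x : ℝ, 0 ≤ x → 0 < b * x ^ 2 + 2 * c * x + b := by
    intro x hx
    have := hA1 x hx
    nlinarith [sq_nonneg x]
  have hw : 0 < Real.sqrt b := Real.sqrt_pos.2 hb
  set F : ℝ → ℝ := fun x =>
    Real.pi * (q3 * x ^ 3 + q2 * x ^ 2 + q1 * x + q0) /
      (8 * (Real.sqrt (b * x ^ 2 + 2 * c * x + b)) ^ 3 * (Real.sqrt b) ^ 3) with hF
  -- derivative
  have hderiv : ∀ x ∈ Set.Ioi (0 : ℝ), HasDerivAt F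
      (Real.pi * (x * ((b * x ^ 2 + 2 * c * x + b) + 3 * b * (x ^ 2 - 1))) /
        (8 * (Real.sqrt (b * x ^ 2 + 2 * c * x + b)) ^ 5 * (Real.sqrt b) ^ 3)) x := by
    intro x hx
    have hx0 : (0 : ℝ) < x := hx
    have hax : 0 < b * x ^ 2 + 2 * c * x + b := hApos x hx0.le
    have hA' := (((hasDerivAt_pow 2 x).const_mul b).add
      ((hasDerivAt_id x).const_mul (2 * c))).add_const b
    have hsA := hA'.sqrt hax.ne'
    have hcube := hsA.pow 3
    have hden := (hcube.const_mul 8).mul_const ((Real.sqrt b) ^ 3)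
    have hnum := (((((hasDerivAt_pow 3 x).const_mul q3).add
      ((hasDerivAt_pow 2 x).const_mul q2)).add
      ((hasDerivAt_id x).const_mul q1)).add_const q0).const_mul Real.pi
    have hsApos : 0 < Real.sqrt (b * x ^ 2 + 2 * c * x + b) := Real.sqrt_pos.2 hax
    have hFd := hnum.div hden (by exact (mul_pos (mul_pos (by norm_num) (pow_pos hsApos 3)) (pow_pos hw 3)).ne')
    refine hFd.congr_deriv (Eq.symm ?_)
    obtain ⟨v, hv0, hv⟩ : ∃ v, 0 < v ∧ Real.sqrt (b * x ^ 2 + 2 * c * x + b) = v :=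
      ⟨_, hsApos, rfl⟩
    have hv2 : v ^ 2 = b * x ^ 2 + 2 * c * x + b := by rw [← hv]; exact Real.sq_sqrt hax.le
    simp only [Pi.pow_apply, Pi.add_apply, id_eq]
    push_cast
    rw [hv, ← hv2]
    field_simp
    linear_combination (x - (3*q3*x^2+2*q2*x+q1))*hv2
      - (hpoly x)
  -- continuity at 0
  have hb0 : b * (0:ℝ) ^ 2 + 2 * c * 0 + b = b := by ring
  have hcont : ContinuousWithinAt F (Set.Ici 0) 0 := by
    apply ContinuousAt.continuousWithinAt
    apply ContinuousAt.div (by fun_prop) (by fun_prop)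
    rw [hb0]
    positivity
  -- integrability of the integrand
  have hint : IntegrableOn (fun x : ℝ =>
      Real.pi * (x * ((b * x ^ 2 + 2 * c * x + b) + 3 * b * (x ^ 2 - 1))) /
        (8 * (Real.sqrt (b * x ^ 2 + 2 * c * x + b)) ^ 5 * (Real.sqrt b) ^ 3))
      (Set.Ioi (0:ℝ)) := by
    set C0 := Real.pi * (1 + 3 * b / δ) / (8 * (Real.sqrt b) ^ 3 * δ * Real.sqrt δ) with hC0
    refine ((integrable_inv_one_add_sq.const_mul C0).integrableOn).mono' ?_ ?_
    · apply ContinuousOn.aestronglyMeasurable _ measurableSet_Ioi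
      apply ContinuousOn.div (by fun_prop) (by fun_prop)
      intro x hx
      have hax : 0 < b * x ^ 2 + 2 * c * x + b := hApos x (le_of_lt hx)
      have : 0 < Real.sqrt (b * x ^ 2 + 2 * c * x + b) := Real.sqrt_pos.2 hax
      positivity
    · filter_upwards [ae_restrict_mem measurableSet_Ioi] with x hx
      have hx0 : (0:ℝ) < x := hx
      have hax : 0 < b * x ^ 2 + 2 * c * x + b := hApos x hx0.le
      have hA1x := hA1 x hx0.le
      have hu0 : 0 < Real.sqrt (b * x ^ 2 + 2 * c * x + b) := Real.sqrt_pos.2 hax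
      set u := Real.sqrt (b * x ^ 2 + 2 * c * x + b) with hu
      have hu2 : u ^ 2 = b * x ^ 2 + 2 * c * x + b := Real.sq_sqrt hax.le
      have hsx : Real.sqrt δ * x ≤ u := by
        rw [hu]
        rw [show Real.sqrt δ * x = Real.sqrt (δ * x ^ 2) by
          rw [Real.sqrt_mul hδ.le, Real.sqrt_sq hx0.le]]
        apply Real.sqrt_le_sqrt
        nlinarith
      have hM : |(b * x ^ 2 + 2 * c * x + b) + 3 * b * (x ^ 2 - 1)|
          ≤ (1 + 3 * b / δ) * u ^ 2 := by
        rw [hu2, abs_le]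
        have h1 : 3 * b * (1 + x ^ 2) ≤ (3 * b / δ) * (b * x ^ 2 + 2 * c * x + b) := by
          rw [div_mul_eq_mul_div, le_div_iff₀ hδ]
          nlinarith [mul_le_mul_of_nonneg_left hA1x (by positivity : (0:ℝ) ≤ 3 * b)]
        constructor <;> nlinarith [sq_nonneg x, hax]
      have hden5 : (0:ℝ) < 8 * u ^ 5 * (Real.sqrt b) ^ 3 :=
        mul_pos (mul_pos (by norm_num) (pow_pos hu0 5)) (pow_pos hw 3)
      have hnorm : ‖Real.pi * (x * ((b * x ^ 2 + 2 * c * x + b) + 3 * b * (x ^ 2 - 1))) /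
          (8 * u ^ 5 * (Real.sqrt b) ^ 3)‖
          = Real.pi * (x * |(b * x ^ 2 + 2 * c * x + b) + 3 * b * (x ^ 2 - 1)|) /
          (8 * u ^ 5 * (Real.sqrt b) ^ 3) := by
        rw [Real.norm_eq_abs, abs_div, abs_of_pos hden5, abs_mul, abs_mul,
          abs_of_pos Real.pi_pos, abs_of_pos hx0]
      rw [hnorm]
      have hδs : 0 < Real.sqrt δ := Real.sqrt_pos.2 hδ
      calc Real.pi * (x * |(b * x ^ 2 + 2 * c * x + b) + 3 * b * (x ^ 2 - 1)|) /
          (8 * u ^ 5 * (Real.sqrt b) ^ 3)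
          ≤ Real.pi * (x * ((1 + 3 * b / δ) * u ^ 2)) / (8 * u ^ 5 * (Real.sqrt b) ^ 3) := by
            apply div_le_div₀ (by positivity) _ (by positivity) le_rfl
            have hf : (0:ℝ) < 1 + 3 * b / δ := by positivity
            apply mul_le_mul_of_nonneg_left _ Real.pi_pos.le
            exact mul_le_mul_of_nonneg_left hM hx0.le
        _ = Real.pi * (1 + 3 * b / δ) / (8 * (Real.sqrt b) ^ 3) * (x / u ^ 3) := by
            field_simp [hu0.ne', hδ.ne']
        _ ≤ Real.pi * (1 + 3 * b / δ) / (8 * (Real.sqrt b) ^ 3) *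
              (1 / (δ * Real.sqrt δ * (1 + x ^ 2))) := by
            apply mul_le_mul_of_nonneg_left _ (by positivity)
            rw [div_le_div_iff₀ (by positivity) (by positivity)]
            have h1 : δ * (1 + x ^ 2) * (Real.sqrt δ * x) ≤ u ^ 2 * u := by
              apply mul_le_mul (by rw [hu2]; exact hA1x) hsx (by positivity) (by positivity)
            calc x * (δ * Real.sqrt δ * (1 + x ^ 2)) = δ * (1 + x ^ 2) * (Real.sqrt δ * x) := by
                  ring
              _ ≤ u ^ 2 * u := h1
              _ = 1 * u ^ 3 := by ring
        _ = C0 * (1 + x ^ 2)⁻¹ := by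
            rw [hC0]
            field_simp [hδ.ne', hδs.ne']
  -- limit at infinity
  have hsqb3 : (Real.sqrt b) ^ 3 * (Real.sqrt b) ^ 3 = b ^ 3 := by
    rw [← mul_pow, Real.mul_self_sqrt hb.le]
  have htop : Tendsto F atTop (𝓝 (Real.pi * q3 / (8 * b ^ 3))) := by
    have hφc : ContinuousAt (fun z : ℝ =>
        Real.pi * (q3 + q2 * z + q1 * z ^ 2 + q0 * z ^ 3) /
          (8 * (Real.sqrt (b + 2 * c * z + b * z ^ 2)) ^ 3 * (Real.sqrt b) ^ 3)) 0 := by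
      apply ContinuousAt.div (by fun_prop) (by fun_prop)
      norm_num
      positivity
    have h := hφc.tendsto.comp (tendsto_inv_atTop_zero (𝕜 := ℝ))
    have h' : Tendsto ((fun z : ℝ => Real.pi * (q3 + q2 * z + q1 * z ^ 2 + q0 * z ^ 3) /
          (8 * (Real.sqrt (b + 2 * c * z + b * z ^ 2)) ^ 3 * (Real.sqrt b) ^ 3)) ∘ fun r : ℝ => r⁻¹)
        atTop (𝓝 (Real.pi * q3 / (8 * b ^ 3))) := by
      convert h using 2
      norm_num
      rw [show (8:ℝ) * Real.sqrt b ^ 3 * Real.sqrt b ^ 3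
        = 8 * (Real.sqrt b ^ 3 * Real.sqrt b ^ 3) by ring, hsqb3]
    apply h'.congr'
    filter_upwards [eventually_gt_atTop (0:ℝ)] with x hx
    have hax : 0 < b * x ^ 2 + 2 * c * x + b := hApos x hx.le
    simp only [Function.comp_apply]
    have e1 : b + 2 * c * x⁻¹ + b * x⁻¹ ^ 2 = (b * x ^ 2 + 2 * c * x + b) / x ^ 2 := by
      field_simp
    rw [e1, Real.sqrt_div hax.le, Real.sqrt_sq hx.le]
    rw [hF]
    have hu0 : 0 < Real.sqrt (b * x ^ 2 + 2 * c * x + b) := Real.sqrt_pos.2 hax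
    field_simp
  rw [integral_Ioi_of_hasDerivAt_of_tendsto hcont hderiv hint htop]
  rw [hF]
  simp only [hb0]
  norm_num
  rw [show (8:ℝ) * Real.sqrt b ^ 3 * Real.sqrt b ^ 3 = 8 * (Real.sqrt b ^ 3 * Real.sqrt b ^ 3) by
      ring, hsqb3]
  ring

/-- the explicit half-plane integral
`∫_{x>0} ∫_ℝ x(x²+y²-1)/(Φ²(1+x)² + (Φ²+K)y² + K(1-x)²)³ dy dx
  = π/(8Φ²(K+Φ²)²)` for `Φ > 0` and `Φ² + K > 0`. -/
theorem halfplane_explicit_integral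
    (K Φ : ℝ) (hΦ : 0 < Φ) (hK : 0 < Φ ^ 2 + K) :
    (∫ x in Set.Ioi (0 : ℝ), ∫ y : ℝ,
      x * (x ^ 2 + y ^ 2 - 1) /
        (Φ ^ 2 * (1 + x) ^ 2 + (Φ ^ 2 + K) * y ^ 2 + K * (1 - x) ^ 2) ^ 3)
    = Real.pi / (8 * Φ ^ 2 * (K + Φ ^ 2) ^ 2) := by
  have hΦ2 : 0 < Φ ^ 2 := pow_pos hΦ 2
  have hbc : 0 < (Φ ^ 2 + K) + (Φ ^ 2 - K) := by nlinarith
  have ht : 0 < Real.sqrt (Φ ^ 2 + K) := Real.sqrt_pos.2 hK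
  have ht2 : (Real.sqrt (Φ ^ 2 + K)) ^ 2 = Φ ^ 2 + K := Real.sq_sqrt hK.le
  have hcong : Set.EqOn (fun x : ℝ => ∫ y : ℝ,
      x * (x ^ 2 + y ^ 2 - 1) /
        (Φ ^ 2 * (1 + x) ^ 2 + (Φ ^ 2 + K) * y ^ 2 + K * (1 - x) ^ 2) ^ 3)
      (fun x : ℝ =>
        Real.pi * (x * (((Φ ^ 2 + K) * x ^ 2 + 2 * (Φ ^ 2 - K) * x + (Φ ^ 2 + K))
            + 3 * (Φ ^ 2 + K) * (x ^ 2 - 1))) /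
          (8 * (Real.sqrt ((Φ ^ 2 + K) * x ^ 2 + 2 * (Φ ^ 2 - K) * x + (Φ ^ 2 + K))) ^ 5
            * (Real.sqrt (Φ ^ 2 + K)) ^ 3)) (Set.Ioi 0) := by
    intro x hx
    have hx0 : (0 : ℝ) < x := hx
    have hax : 0 < (Φ ^ 2 + K) * x ^ 2 + 2 * (Φ ^ 2 - K) * x + (Φ ^ 2 + K) := by
      nlinarith [mul_pos hΦ2 hx0, mul_nonneg hK.le (sq_nonneg (1 - x))]
    have hs : 0 < Real.sqrt ((Φ ^ 2 + K) * x ^ 2 + 2 * (Φ ^ 2 - K) * x + (Φ ^ 2 + K)) :=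
      Real.sqrt_pos.2 hax
    have hs2 : (Real.sqrt ((Φ ^ 2 + K) * x ^ 2 + 2 * (Φ ^ 2 - K) * x + (Φ ^ 2 + K))) ^ 2
        = (Φ ^ 2 + K) * x ^ 2 + 2 * (Φ ^ 2 - K) * x + (Φ ^ 2 + K) := Real.sq_sqrt hax.le
    show (∫ y : ℝ, x * (x ^ 2 + y ^ 2 - 1) /
        (Φ ^ 2 * (1 + x) ^ 2 + (Φ ^ 2 + K) * y ^ 2 + K * (1 - x) ^ 2) ^ 3) = _
    rw [show (fun y : ℝ => x * (x ^ 2 + y ^ 2 - 1) /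
        (Φ ^ 2 * (1 + x) ^ 2 + (Φ ^ 2 + K) * y ^ 2 + K * (1 - x) ^ 2) ^ 3)
        = fun y : ℝ => x * (x ^ 2 + y ^ 2 - 1) /
          ((Real.sqrt ((Φ ^ 2 + K) * x ^ 2 + 2 * (Φ ^ 2 - K) * x + (Φ ^ 2 + K))) ^ 2
            + (Real.sqrt (Φ ^ 2 + K)) ^ 2 * y ^ 2) ^ 3 from
      funext fun y => by rw [hs2, ht2]; ring_nf]
    rw [inner_int _ _ x hs ht, hs2, ht2]
  rw [MeasureTheory.setIntegral_congr_fun measurableSet_Ioi hcong]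
  by_cases hK0 : K = 0
  · subst hK0
    rw [outer_int (Φ ^ 2 + 0) (Φ ^ 2 - 0) 1 (-1) 0 0 (by nlinarith) (by nlinarith)
      (fun x => by ring)]
    field_simp
    ring
  · rw [outer_int (Φ ^ 2 + K) (Φ ^ 2 - K)
      (-(Φ ^ 2 + K) * (Φ ^ 2 - K) / (2 * K * Φ ^ 2))
      (-1 - 3 * (Φ ^ 4 + K ^ 2) / (2 * K * Φ ^ 2))
      (-3 * (Φ ^ 2 + K) * (Φ ^ 2 - K) / (2 * K * Φ ^ 2))
      (-(Φ ^ 2 + K) ^ 2 / (2 * K * Φ ^ 2)) hK hbc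
      (fun x => by field_simp; ring)]
    have hKP : K + Φ ^ 2 ≠ 0 := ne_of_gt (by linarith)
    field_simp [hK0, hKP]
    ring
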